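/- Let m ≥ 1 and let d be an integer with 1 ≤ d ≤ m. Then the binary homogeneous Reed–Muller code HRMC_d(m,2) has F_2-dimension Σ_{t=1}^{d} C(m,t), and the minimum Hamming weight of a nonzero codeword of HRMC_d(m,2) equals 2^{m−d}. -/

import Mathlib

open MvPolynomial

/-- The weighted degree: total degree of `F(Y_0^{w_0}, …, Y_{m-1}^{w_{m-1}})`. -/
noncomputable def wdeg {F : Type*} [CommSemiring F] {m : ℕ} (w : Fin m → ℕ)
    (f : MvPolynomial (Fin m) F) : ℕ :=
  ((MvPolynomial.bind₁ (fun l : Fin m => (MvPolynomial.X l : MvPolynomial (Fin m) F) ^ (w l))) f).totalDegree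

/-- The weighted Reed–Muller code `WRMC_ω(m,q)` as a subspace of `F^{q^m}`. -/
noncomputable def WRMC (F : Type*) [CommSemiring F] [Fintype F] (m : ℕ) (w : Fin m → ℕ) (ω : ℕ) :
    Submodule F ((Fin m → F) → F) :=
  Submodule.span F
    {v | ∃ f : MvPolynomial (Fin m) F, wdeg w f ≤ ω ∧ v = fun P => MvPolynomial.eval P f}

/-- The generalized Reed–Muller code `C_ω(m,q)`. -/
noncomputable def GRM (F : Type*) [CommSemiring F] [Fintype F] (m ω : ℕ) :
    Submodule F ((Fin m → F) → F) :=
  Submodule.span F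
    {v | ∃ f : MvPolynomial (Fin m) F, f.totalDegree ≤ ω ∧ v = fun P => MvPolynomial.eval P f}

/-- The homogeneous Reed–Muller code `HRMC_d(m,q)`. -/
noncomputable def HRMC (F : Type*) [CommSemiring F] [Fintype F] (m d : ℕ) :
    Submodule F ((Fin m → F) → F) :=
  Submodule.span F
    {v | ∃ f : MvPolynomial (Fin m) F, f.IsHomogeneous d ∧ v = fun P => MvPolynomial.eval P f}

/-- The ideal `(X_0^p - 1, …, X_{m-1}^p - 1)`. -/
noncomputable def Aideal (p m : ℕ) : Ideal (MvPolynomial (Fin m) (ZMod p)) :=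
  Ideal.span (Set.range fun l : Fin m => (MvPolynomial.X l : MvPolynomial (Fin m) (ZMod p)) ^ p - 1)

/-- The modular algebra `A = F_p[X_0,…,X_{m-1}]/(X_0^p-1,…,X_{m-1}^p-1)`. -/
abbrev ModA (p m : ℕ) : Type := MvPolynomial (Fin m) (ZMod p) ⧸ Aideal p m

/-- `x_l`, the image of `X_l` in `A`. -/
noncomputable def xA (p m : ℕ) (l : Fin m) : ModA p m :=
  Ideal.Quotient.mk (Aideal p m) (MvPolynomial.X l)

/-- The identification `ψ : F_p^{p^m} → A` sending `(c_j)` to `Σ_j c_j x_0^{j_0} ⋯ x_{m-1}^{j_{m-1}}`. -/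
noncomputable def psi (p m : ℕ) [NeZero p] : ((Fin m → ZMod p) → ZMod p) →ₗ[ZMod p] ModA p m where
  toFun c := ∑ j : Fin m → ZMod p, c j • ∏ l, (xA p m l) ^ (j l).val
  map_add' a b := by simp [add_smul, Finset.sum_add_distrib]
  map_smul' r a := by simp [Finset.smul_sum, smul_smul]

/-- `b(η) = ∏_{l ∈ η} (x_l - 1)` in the binary algebra `A`. -/
noncomputable def bElt (m : ℕ) (η : Finset (Fin m)) : ModA 2 m :=
  ∏ l ∈ η, (xA 2 m l - 1)

/-! ### Auxiliary definitions and lemmas for the proof of `hrmc_binary_parameters` -/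

section HRMCaux

/-- evaluation vector of the squarefree monomial `∏_{i ∈ S} Y_i`. -/
noncomputable def eS (m : ℕ) (S : Finset (Fin m)) : (Fin m → ZMod 2) → ZMod 2 :=
  fun P => ∏ i ∈ S, P i

lemma zmod2_pow (x : ZMod 2) {k : ℕ} (hk : k ≠ 0) : x ^ k = x := by
  fin_cases x
  · exact zero_pow hk
  · exact one_pow k

lemma zmod2_ne_zero : ∀ {x : ZMod 2}, x ≠ 0 ↔ x = 1 := by decide

lemma prod_ind {α : Type*} [DecidableEq α] (T S : Finset α) :
    (∏ i ∈ T, (if i ∈ S then (1 : ZMod 2) else 0)) = if T ⊆ S then 1 else 0 := by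
  split_ifs with h
  · exact Finset.prod_eq_one fun i hi => by simp [h hi]
  · obtain ⟨i, hiT, hiS⟩ := Finset.not_subset.mp h
    exact Finset.prod_eq_zero hiT (by simp [hiS])

/-- indicator point of a subset -/
def chi (m : ℕ) (S : Finset (Fin m)) : Fin m → ZMod 2 := fun i => if i ∈ S then 1 else 0

lemma eS_chi (m : ℕ) (T S : Finset (Fin m)) :
    eS m T (chi m S) = if T ⊆ S then 1 else 0 := prod_ind T S

lemma eS_indep (m : ℕ) : LinearIndependent (ZMod 2) (eS m) := by
  rw [Fintype.linearIndependent_iff]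
  intro c hc
  by_contra h
  push_neg at h
  obtain ⟨S, hS, hmin⟩ := Finset.exists_min_image
    ({S | c S ≠ 0} : Finset (Finset (Fin m))) Finset.card (by
      obtain ⟨S, hS⟩ := h; exact ⟨S, by simpa using hS⟩)
  simp only [Finset.mem_filter] at hS
  have hc' := congrFun hc (chi m S)
  simp only [Finset.sum_apply, Pi.smul_apply, Pi.zero_apply, smul_eq_mul, eS_chi] at hc'
  rw [Finset.sum_eq_single S] at hc'
  · simp only [Finset.Subset.refl, if_true, mul_one] at hc'
    exact hS.2 hc'
  · intro T _ hTS
    by_cases hsub : T ⊆ S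
    · have hlt : T.card < S.card :=
        Finset.card_lt_card (Finset.ssubset_iff_subset_ne.mpr ⟨hsub, hTS⟩)
      have hT0 : c T = 0 := by
        by_contra hcT
        have := hmin T (by simpa using hcT)
        omega
      simp [hT0]
    · simp [hsub]
  · simp

lemma hrmc_span (m d : ℕ) (hd1 : 1 ≤ d) :
    HRMC (ZMod 2) m d =
      Submodule.span (ZMod 2) (eS m '' {S | S.Nonempty ∧ S.card ≤ d}) := by
  apply le_antisymm
  · rw [HRMC, Submodule.span_le]
    rintro v ⟨f, hf, rfl⟩
    have hv : (fun P => eval P f) =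
        ∑ u ∈ f.support, f.coeff u • eS m u.support := by
      funext P
      rw [Finset.sum_apply]
      conv_lhs => rw [f.as_sum]
      rw [eval_sum]
      refine Finset.sum_congr rfl fun u hu => ?_
      rw [eval_monomial]
      simp only [Pi.smul_apply, smul_eq_mul, eS]
      congr 1
      rw [Finsupp.prod]
      exact Finset.prod_congr rfl fun i hi =>
        zmod2_pow _ (Finsupp.mem_support_iff.mp hi)
    rw [hv]
    apply Submodule.sum_mem
    intro u hu
    apply Submodule.smul_mem
    apply Submodule.subset_span
    refine ⟨u.support, ⟨?_, ?_⟩, rfl⟩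
    · rw [Finset.nonempty_iff_ne_empty]
      intro hemp
      have hdeg := hf (Finsupp.mem_support_iff.mp hu)
      rw [show (1 : Fin m → ℕ) = fun _ => 1 from rfl, ← Finsupp.degree_eq_weight_one] at hdeg
      rw [Finsupp.degree_apply, hemp] at hdeg
      simp at hdeg
      omega
    · have hdeg := hf (Finsupp.mem_support_iff.mp hu)
      rw [show (1 : Fin m → ℕ) = fun _ => 1 from rfl, ← Finsupp.degree_eq_weight_one, Finsupp.degree] at hdeg
      calc u.support.card = ∑ i ∈ u.support, 1 := by simp
        _ ≤ ∑ i ∈ u.support, u i :=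
          Finset.sum_le_sum fun i hi => Nat.one_le_iff_ne_zero.mpr (Finsupp.mem_support_iff.mp hi)
        _ = d := hdeg
  · rw [Submodule.span_le]
    rintro v ⟨S, ⟨hSne, hScard⟩, rfl⟩
    obtain ⟨i₀, hi₀⟩ := hSne
    apply Submodule.subset_span
    refine ⟨(X i₀ : MvPolynomial (Fin m) (ZMod 2)) ^ (d - S.card + 1) *
      ∏ i ∈ S.erase i₀, X i, ?_, ?_⟩
    · have h1 : ((X i₀ : MvPolynomial (Fin m) (ZMod 2)) ^ (d - S.card + 1)).IsHomogeneous
        (d - S.card + 1) := isHomogeneous_X_pow _ _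
      have h2 : ((∏ i ∈ S.erase i₀, X i : MvPolynomial (Fin m) (ZMod 2))).IsHomogeneous
          (S.erase i₀).card := by
        simpa using MvPolynomial.IsHomogeneous.prod (S.erase i₀) _ (fun _ => 1)
          (fun i _ => isHomogeneous_X _ i)
      have := h1.mul h2
      have hcc : (d - S.card + 1) + (S.erase i₀).card = d := by
        rw [Finset.card_erase_of_mem hi₀]
        have := Finset.card_pos.mpr ⟨i₀, hi₀⟩
        omega
      rwa [hcc] at this
    · funext P
      simp only [eval_mul, eval_pow, eval_X, eval_prod, eS]
      rw [zmod2_pow _ (by omega)]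
      exact (Finset.mul_prod_erase S _ hi₀).symm

/-- the index set of the spanning family. -/
noncomputable def Scal (m d : ℕ) : Finset (Finset (Fin m)) :=
  {S | S.Nonempty ∧ S.card ≤ d}

lemma Scal_coe (m d : ℕ) :
    (↑(Scal m d) : Set (Finset (Fin m))) = {S | S.Nonempty ∧ S.card ≤ d} := by
  ext S; simp [Scal]

lemma Scal_card (m d : ℕ) : (Scal m d).card = ∑ t ∈ Finset.Icc 1 d, m.choose t := by
  have h : Scal m d = (Finset.Icc 1 d).biUnion
      (fun t => Finset.powersetCard t (Finset.univ : Finset (Fin m))) := by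
    ext S
    simp only [Scal, Finset.mem_filter, Finset.mem_univ, true_and, Finset.mem_biUnion,
      Finset.mem_Icc, Finset.mem_powersetCard, Finset.mem_coe]
    constructor
    · rintro ⟨hne, hle⟩
      exact ⟨S.card, ⟨Finset.one_le_card.mpr hne, hle⟩, Finset.subset_univ S, rfl⟩
    · rintro ⟨t, ⟨h1, h2⟩, _, rfl⟩
      exact ⟨Finset.one_le_card.mp h1, h2⟩
  rw [h, Finset.card_biUnion]
  · refine Finset.sum_congr rfl fun t _ => ?_
    rw [Finset.card_powersetCard, Finset.card_univ, Fintype.card_fin]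
  · intro a _ b _ hab
    apply Finset.disjoint_left.mpr
    intro S hSa hSb
    rw [Finset.mem_powersetCard] at hSa hSb
    exact hab (hSa.2 ▸ hSb.2)

lemma dim_span (m d : ℕ) :
    Module.finrank (ZMod 2)
      (Submodule.span (ZMod 2) (eS m '' {S | S.Nonempty ∧ S.card ≤ d})) =
      ∑ t ∈ Finset.Icc 1 d, m.choose t := by
  rw [← Scal_coe]
  have hind : LinearIndependent (ZMod 2) (fun S : (Scal m d : Finset _) => eS m S.1) :=
    (eS_indep m).comp _ Subtype.val_injective
  have hr : Set.range (fun S : (Scal m d : Finset _) => eS m S.1) = eS m '' ↑(Scal m d) := by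
    ext v
    simp [Set.mem_image, Finset.mem_coe]
  rw [← hr, finrank_span_eq_card hind, Fintype.card_coe, Scal_card]

noncomputable def resEquiv (m : ℕ) (S : Finset (Fin m)) :
    {P : Fin m → ZMod 2 // ∀ i ∈ S, P i = 1} ≃ ({i : Fin m // i ∉ S} → ZMod 2) where
  toFun P i := P.1 i.1
  invFun g := ⟨fun i => if h : i ∈ S then 1 else g ⟨i, h⟩, fun i hi => by simp [hi]⟩
  left_inv P := by
    ext i
    by_cases h : i ∈ S
    · simp [h, P.2 i h]
    · simp [h]
  right_inv g := by
    ext i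
    simp [i.2]

lemma eS_ne_zero_iff (m : ℕ) (S : Finset (Fin m)) (P : Fin m → ZMod 2) :
    eS m S P ≠ 0 ↔ ∀ i ∈ S, P i = 1 := by
  rw [eS, Finset.prod_ne_zero_iff]
  exact forall₂_congr fun i _ => zmod2_ne_zero

lemma eS_weight (m : ℕ) (S : Finset (Fin m)) :
    hammingNorm (eS m S) = 2 ^ (m - S.card) := by
  have h1 : hammingNorm (eS m S) = Fintype.card {P : Fin m → ZMod 2 // ∀ i ∈ S, P i = 1} := by
    rw [Fintype.card_subtype, hammingNorm]
    congr 1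
    apply Finset.filter_congr
    intro P _
    simpa using eS_ne_zero_iff m S P
  rw [h1, Fintype.card_congr (resEquiv m S), Fintype.card_fun]
  have h2 : Fintype.card {i : Fin m // i ∉ S} = m - S.card := by
    rw [Fintype.card_subtype_compl]
    congr 1
    · exact Fintype.card_fin m
    · exact Fintype.card_coe S
  rw [h2]
  norm_num

lemma count_supersets {α : Type*} [DecidableEq α] (S₀ A : Finset α) (hA : A ⊆ S₀) :
    (S₀.powerset.filter (fun U => A ⊆ U)).card = 2 ^ ((S₀ \ A).card) := by
  rw [← Finset.card_powerset]
  apply Finset.card_bij' (fun U _ => U \ A) (fun V _ => V ∪ A)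
  · intro U hU
    simp only [Finset.mem_filter, Finset.mem_powerset] at hU
    rw [Finset.mem_powerset]
    exact Finset.sdiff_subset_sdiff hU.1 (Finset.Subset.refl A)
  · intro V hV
    rw [Finset.mem_powerset] at hV
    simp only [Finset.mem_filter, Finset.mem_powerset]
    exact ⟨Finset.union_subset (hV.trans (Finset.sdiff_subset)) hA, Finset.subset_union_right⟩
  · intro U hU
    simp only [Finset.mem_filter, Finset.mem_powerset] at hU
    exact Finset.sdiff_union_of_subset hU.2
  · intro V hV
    rw [Finset.mem_powerset] at hV
    rw [Finset.union_sdiff_right]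
    exact Finset.sdiff_eq_self_of_disjoint ((Finset.sdiff_disjoint).mono_left hV)

/-- the probing point: coordinates in `S₀` given by the indicator of `U`, outside by `z`. -/
noncomputable def ptF (m : ℕ) (S₀ U : Finset (Fin m)) (z : Fin m → ZMod 2) : Fin m → ZMod 2 :=
  fun i => if i ∈ S₀ then (if i ∈ U then 1 else 0) else z i

lemma key_sum (m : ℕ) (𝒮 : Finset (Finset (Fin m))) (c : Finset (Fin m) → ZMod 2)
    (S₀ : Finset (Fin m)) (hS₀ : S₀ ∈ 𝒮)
    (hmax : ∀ S ∈ 𝒮, c S ≠ 0 → S.card ≤ S₀.card) (z : Fin m → ZMod 2) :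
    ∑ U ∈ S₀.powerset, (∑ S ∈ 𝒮, c S • eS m S) (ptF m S₀ U z) = c S₀ := by
  have hterm : ∀ S ∈ 𝒮, ∀ U ∈ S₀.powerset,
      eS m S (ptF m S₀ U z) =
        (if S.filter (· ∈ S₀) ⊆ U then 1 else 0) * ∏ i ∈ S.filter (· ∉ S₀), z i := by
    intro S _ U _
    rw [eS, ← Finset.prod_filter_mul_prod_filter_not S (· ∈ S₀), ← prod_ind (S.filter (· ∈ S₀)) U]
    congr 1
    · refine Finset.prod_congr rfl fun i hi => ?_
      rw [Finset.mem_filter] at hi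
      simp [ptF, hi.2]
    · refine Finset.prod_congr rfl fun i hi => ?_
      rw [Finset.mem_filter] at hi
      simp [ptF, hi.2]
  simp only [Finset.sum_apply, Pi.smul_apply, smul_eq_mul]
  rw [Finset.sum_comm]
  rw [Finset.sum_eq_single S₀]
  · have hA : S₀.filter (· ∈ S₀) = S₀ := Finset.filter_true_of_mem (fun i hi => hi)
    have hK : S₀.filter (fun i => ¬ i ∈ S₀) = ∅ := Finset.filter_false_of_mem (fun i hi h => h hi)
    have : ∀ U ∈ S₀.powerset, c S₀ * eS m S₀ (ptF m S₀ U z) =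
        if S₀ = U then c S₀ else 0 := by
      intro U hU
      rw [hterm S₀ hS₀ U hU, hA, hK]
      rw [Finset.mem_powerset] at hU
      simp only [Finset.prod_empty, mul_one]
      by_cases h : S₀ ⊆ U
      · rw [if_pos h, if_pos (Finset.Subset.antisymm h hU), mul_one]
      · rw [if_neg h, if_neg (fun hh => h (le_of_eq hh)), mul_zero]
    rw [Finset.sum_congr rfl this, Finset.sum_ite_eq, if_pos (Finset.mem_powerset_self S₀)]
  · intro S hS hne
    by_cases hcS : c S = 0
    · simp [hcS]
    · have hstep : ∀ U ∈ S₀.powerset, c S * eS m S (ptF m S₀ U z) =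
          if S.filter (· ∈ S₀) ⊆ U then c S * ∏ i ∈ S.filter (· ∉ S₀), z i else 0 := by
        intro U hU
        rw [hterm S hS U hU]
        split_ifs <;> ring
      rw [Finset.sum_congr rfl hstep, ← Finset.sum_filter, Finset.sum_const]
      have hA : S.filter (· ∈ S₀) ⊆ S₀ := fun i hi => (Finset.mem_filter.mp hi).2
      rw [count_supersets S₀ _ hA]
      have hne' : (S₀ \ S.filter (· ∈ S₀)).Nonempty := by
        rw [Finset.sdiff_nonempty]
        intro hsub
        have hS₀S : S₀ ⊆ S := hsub.trans (Finset.filter_subset _ _)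
        exact hne (Finset.eq_of_subset_of_card_le hS₀S (hmax S hS hcS)).symm
      obtain ⟨k, hk⟩ : ∃ k, (S₀ \ S.filter (· ∈ S₀)).card = k + 1 :=
        ⟨_, (Nat.succ_pred_eq_of_pos (Finset.card_pos.mpr hne')).symm⟩
      rw [hk, nsmul_eq_mul]
      push_cast
      norm_num
      exact Or.inl (by decide)
  · intro h
    exact absurd hS₀ h

lemma weight_lower (m d : ℕ) (v : (Fin m → ZMod 2) → ZMod 2)
    (hv : v ∈ Submodule.span (ZMod 2) (eS m '' {S | S.Nonempty ∧ S.card ≤ d}))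
    (hv0 : v ≠ 0) : 2 ^ (m - d) ≤ hammingNorm v := by
  rw [← Scal_coe, ← Finset.coe_image, Submodule.mem_span_finset] at hv
  obtain ⟨f, -, hf⟩ := hv
  rw [Finset.sum_image (fun x _ y _ h => (eS_indep m).injective h)] at hf
  set c : Finset (Fin m) → ZMod 2 := fun S => f (eS m S) with hc
  -- choose S₀ of maximal cardinality among those with c S ≠ 0
  have hTne : ((Scal m d).filter (fun S => c S ≠ 0)).Nonempty := by
    rw [Finset.filter_nonempty_iff]
    by_contra h
    push_neg at h
    apply hv0
    rw [← hf]
    exact Finset.sum_eq_zero fun S hS => by rw [show f (eS m S) = c S from rfl, h S hS, zero_smul]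
  obtain ⟨S₀, hS₀T, hS₀max⟩ := Finset.exists_max_image _ Finset.card hTne
  rw [Finset.mem_filter] at hS₀T
  have hmax : ∀ S ∈ Scal m d, c S ≠ 0 → S.card ≤ S₀.card := fun S hS hcS =>
    hS₀max S (Finset.mem_filter.mpr ⟨hS, hcS⟩)
  -- for each W, find a nonzero point in the coset determined by `chi m W`
  have hexW : ∀ W : Finset (Fin m), ∃ U, v (ptF m S₀ U (chi m W)) ≠ 0 := by
    intro W
    have := key_sum m (Scal m d) c S₀ hS₀T.1 hmax (chi m W)
    rw [hf] at this
    by_contra h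
    push_neg at h
    rw [Finset.sum_eq_zero (fun U _ => h U)] at this
    exact hS₀T.2 this.symm
  choose U hU using hexW
  -- build the injection from the powerset of S₀ᶜ into the support of v
  have hinj : ∀ W₁ ∈ S₀ᶜ.powerset, ∀ W₂ ∈ S₀ᶜ.powerset,
      ptF m S₀ (U W₁) (chi m W₁) = ptF m S₀ (U W₂) (chi m W₂) → W₁ = W₂ := by
    intro W₁ h₁ W₂ h₂ heq
    rw [Finset.mem_powerset] at h₁ h₂
    ext i
    by_cases hi : i ∈ S₀
    · constructor
      · intro hW; exact absurd (h₁ hW) (by simp [hi])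
      · intro hW; exact absurd (h₂ hW) (by simp [hi])
    · have := congrFun heq i
      simp only [ptF, if_neg hi, chi] at this
      by_cases h1 : i ∈ W₁ <;> by_cases h2 : i ∈ W₂ <;>
        simp_all
  have hcard : S₀ᶜ.powerset.card ≤ hammingNorm v := by
    rw [hammingNorm]
    apply Finset.card_le_card_of_injOn (fun W => ptF m S₀ (U W) (chi m W))
    · intro W _
      simp only [Finset.mem_filter, Finset.mem_univ, true_and]
      simpa using hU W
    · intro W₁ h₁ W₂ h₂ heq
      exact hinj W₁ h₁ W₂ h₂ heq
  rw [Finset.card_powerset, Finset.card_compl, Fintype.card_fin] at hcard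
  refine le_trans ?_ hcard
  apply Nat.pow_le_pow_right (by norm_num)
  have hcardS₀ : S₀.card ≤ d := by
    have := hS₀T.1
    rw [Scal, Finset.mem_filter] at this
    exact this.2.2
  omega

end HRMCaux

/-- the binary homogeneous Reed–Muller code `HRMC_d(m,2)` has dimension
`Σ_{t=1}^{d} C(m,t)` and minimum nonzero Hamming weight `2^{m-d}`. -/
theorem hrmc_binary_parameters (m d : ℕ) (hm : 1 ≤ m) (hd1 : 1 ≤ d) (hd2 : d ≤ m) :
    Module.finrank (ZMod 2) (HRMC (ZMod 2) m d) = ∑ t ∈ Finset.Icc 1 d, m.choose t ∧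
    IsLeast {n : ℕ | ∃ v ∈ HRMC (ZMod 2) m d, v ≠ 0 ∧ hammingNorm v = n} (2 ^ (m - d)) := by
  constructor
  · rw [hrmc_span m d hd1, dim_span]
  · constructor
    · obtain ⟨S, hSsub, hScard⟩ := Finset.exists_subset_card_eq (s := (Finset.univ : Finset (Fin m))) (n := d)
        (by simpa using hd2)
      refine ⟨eS m S, ?_, ?_, ?_⟩
      · rw [hrmc_span m d hd1]
        exact Submodule.subset_span
          ⟨S, ⟨Finset.card_pos.mp (by omega), le_of_eq hScard⟩, rfl⟩
      · intro h0
        have := congrFun h0 (chi m S)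
        rw [eS_chi] at this
        simp at this
      · rw [eS_weight, hScard]
    · rintro n ⟨v, hvmem, hv0, rfl⟩
      rw [hrmc_span m d hd1] at hvmem
      exact weight_lower m d v hvmem hv0
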